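/- Let n ≥ 2 and d ≥ 1. Let ρ be an n×n complex positive semidefinite matrix with trace 1, let η_0,…,η_{n−1} be unit vectors in ℂ^d, and let W be the n×n matrix with entries W_{ij} = √(ρ_{ii}·ρ_{jj})·⟨η_i, η_j⟩. Let B be any n×n complex matrix with Bᴴ B = W, and set P := Σ_i |B_{ii}|². Then X := (1/n)·Σ_{j≠k} |ρ_{jk}·⟨η_k, η_j⟩| ≤ ((n−2)/n)·(1−P) + (2/n)·√((n−1)·P·(1−P)). -/

import Mathlib

set_option maxHeartbeats 1000000

open Matrix Finset
open scoped ComplexOrder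

/-- Off-diagonal sum identity. -/
lemma aux_offdiag_sum {n : ℕ} (f : Fin n → ℝ) :
    ∑ j, ∑ k ∈ univ.filter (fun k => k ≠ j), f j * f k
      = (∑ j, f j) ^ 2 - ∑ j, (f j) ^ 2 := by
  have h : ∀ j : Fin n, ∑ k ∈ univ.filter (fun k => k ≠ j), f j * f k
      = f j * (∑ k, f k) - f j ^ 2 := by
    intro j
    rw [Finset.filter_ne', ← Finset.mul_sum,
      ← Finset.add_sum_erase (univ : Finset (Fin n)) f (mem_univ j)]
    ring
  rw [Finset.sum_congr rfl (fun j _ => h j), Finset.sum_sub_distrib, ← Finset.sum_mul, sq]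

/-- Real part of a diagonal entry of `Mᴴ * M` is the column norm squared. -/
lemma aux_col_norm {n : ℕ} (M : Matrix (Fin n) (Fin n) ℂ) (m : Fin n) :
    ((Mᴴ * M) m m).re = ∑ i, ‖M i m‖ ^ 2 := by
  have h1 : (Mᴴ * M) m m = ∑ i, (starRingEnd ℂ) (M i m) * M i m := by
    simp [Matrix.mul_apply, Matrix.conjTranspose_apply]
  rw [h1, Complex.re_sum]
  refine Finset.sum_congr rfl fun i _ => ?_
  have : (starRingEnd ℂ) (M i m) * M i m = ((Complex.normSq (M i m) : ℝ) : ℂ) := by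
    rw [mul_comm, Complex.mul_conj]
  rw [this, Complex.ofReal_re, Complex.sq_norm]

/-- Entry of `Mᴴ * M` bounded by product of column norms (Cauchy–Schwarz). -/
lemma aux_entry_le {n : ℕ} (M : Matrix (Fin n) (Fin n) ℂ) (j k : Fin n) :
    ‖(Mᴴ * M) j k‖
      ≤ Real.sqrt (∑ i, ‖M i j‖ ^ 2) *
        Real.sqrt (∑ i, ‖M i k‖ ^ 2) := by
  have h1 : (Mᴴ * M) j k = ∑ i, (starRingEnd ℂ) (M i j) * M i k := by
    simp [Matrix.mul_apply, Matrix.conjTranspose_apply]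
  rw [h1]
  calc ‖∑ i, (starRingEnd ℂ) (M i j) * M i k‖
      ≤ ∑ i, ‖(starRingEnd ℂ) (M i j) * M i k‖ :=
        norm_sum_le _ _
    _ = ∑ i, ‖M i j‖ * ‖M i k‖ := by
        refine Finset.sum_congr rfl fun i _ => ?_
        rw [norm_mul, Complex.norm_conj]
    _ ≤ _ := Real.sum_mul_le_sqrt_mul_sqrt _ _ _

theorem duality_lemma_one (n d : ℕ) (hn : 2 ≤ n) (hd : 1 ≤ d)
    (ρ : Matrix (Fin n) (Fin n) ℂ) (hρ : ρ.PosSemidef) (hρtr : ρ.trace = 1)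
    (η : Fin n → EuclideanSpace ℂ (Fin d)) (hη : ∀ j, ‖η j‖ = 1)
    (W : Matrix (Fin n) (Fin n) ℂ)
    (hW : ∀ i j, W i j =
      (Real.sqrt ((ρ i i).re * (ρ j j).re) : ℂ) * (inner ℂ (η i) (η j) : ℂ))
    (B : Matrix (Fin n) (Fin n) ℂ) (hB : Bᴴ * B = W)
    (P : ℝ) (hP : P = ∑ i, ‖B i i‖ ^ 2)
    (X : ℝ) (hX : X = (1 / n) * ∑ j, ∑ k ∈ univ.filter (fun k => k ≠ j),
      ‖ρ j k * (inner ℂ (η k) (η j) : ℂ)‖) :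
    X ≤ (((n : ℝ) - 2) / n) * (1 - P) +
      (2 / n) * Real.sqrt (((n : ℝ) - 1) * P * (1 - P)) := by
  have hn0 : (0:ℝ) < n := by positivity
  have hn1 : (0:ℝ) ≤ (n:ℝ) - 1 := by
    have : (2:ℝ) ≤ n := by exact_mod_cast hn
    linarith
  have hn2 : (0:ℝ) ≤ (n:ℝ) - 2 := by
    have : (2:ℝ) ≤ n := by exact_mod_cast hn
    linarith
  set a : Fin n → Fin n → ℝ := fun i j => ‖B i j‖ with ha
  have ha0 : ∀ i j, 0 ≤ a i j := fun i j => norm_nonneg _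
  -- diagonal of ρ is nonneg real
  have hdiag_nonneg : ∀ j, 0 ≤ (ρ j j).re := by
    intro j
    exact (Complex.nonneg_iff.mp (hρ.diag_nonneg (i := j))).1
  -- |ρ j k| ≤ √(ρjj.re) * √(ρkk.re)
  have hrho_bound : ∀ j k, ‖ρ j k‖
      ≤ Real.sqrt ((ρ j j).re) * Real.sqrt ((ρ k k).re) := by
    intro j k
    obtain ⟨S, hSS⟩ : ∃ S : Matrix (Fin n) (Fin n) ℂ, Sᴴ * S = ρ := by
      open scoped MatrixOrder in
      obtain ⟨X, hX, -, h⟩ := CFC.exists_sqrt_of_isSelfAdjoint_of_quasispectrumRestricts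
        hρ.isHermitian (QuasispectrumRestricts.nnreal_of_nonneg hρ.nonneg)
      exact ⟨X, by rw [show Xᴴ = X from hX.star_eq]; exact h⟩
    have h := aux_entry_le S j k
    rw [hSS] at h
    rw [← aux_col_norm S j, ← aux_col_norm S k, hSS] at h
    exact h
  -- key pointwise bound
  have hpoint : ∀ j k, ‖ρ j k * (inner ℂ (η k) (η j) : ℂ)‖
      ≤ ∑ i, a i j * a i k := by
    intro j k
    have hinner_eq : ‖(inner ℂ (η k) (η j) : ℂ)‖
        = ‖(inner ℂ (η j) (η k) : ℂ)‖ := by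
      rw [← inner_conj_symm (η j) (η k), Complex.norm_conj]
    have h1 : ‖ρ j k * (inner ℂ (η k) (η j) : ℂ)‖
        ≤ Real.sqrt ((ρ j j).re * (ρ k k).re) * ‖(inner ℂ (η j) (η k) : ℂ)‖ := by
      rw [norm_mul, Real.sqrt_mul (hdiag_nonneg j), hinner_eq]
      exact mul_le_mul_of_nonneg_right (hrho_bound j k) (norm_nonneg _)
    have h2 : ‖W j k‖
        = Real.sqrt ((ρ j j).re * (ρ k k).re) * ‖(inner ℂ (η j) (η k) : ℂ)‖ := by
      rw [hW j k, norm_mul, Complex.norm_real,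
        Real.norm_of_nonneg (Real.sqrt_nonneg _)]
    have h3 : ‖W j k‖ ≤ ∑ i, a i j * a i k := by
      rw [← hB]
      have h4 : (Bᴴ * B) j k = ∑ i, (starRingEnd ℂ) (B i j) * B i k := by
        simp [Matrix.mul_apply, Matrix.conjTranspose_apply]
      rw [h4]
      calc ‖∑ i, (starRingEnd ℂ) (B i j) * B i k‖
          ≤ ∑ i, ‖(starRingEnd ℂ) (B i j) * B i k‖ :=
            norm_sum_le _ _
        _ = ∑ i, a i j * a i k := by
            refine Finset.sum_congr rfl fun i _ => ?_
            rw [norm_mul, Complex.norm_conj]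
    calc ‖ρ j k * (inner ℂ (η k) (η j) : ℂ)‖
        ≤ Real.sqrt ((ρ j j).re * (ρ k k).re) * ‖(inner ℂ (η j) (η k) : ℂ)‖ := h1
      _ = ‖W j k‖ := h2.symm
      _ ≤ ∑ i, a i j * a i k := h3
  -- row quantities
  set t : Fin n → ℝ := fun i => a i i with ht
  set s : Fin n → ℝ := fun i => ∑ j ∈ univ.erase i, a i j with hs
  set q : Fin n → ℝ := fun i => ∑ j ∈ univ.erase i, a i j ^ 2 with hq
  have hs0 : ∀ i, 0 ≤ s i := fun i => Finset.sum_nonneg fun j _ => ha0 i j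
  have hq0 : ∀ i, 0 ≤ q i := fun i => Finset.sum_nonneg fun j _ => sq_nonneg _
  have hrow_sum : ∀ i, ∑ j, a i j = t i + s i := by
    intro i
    rw [ht, hs, Finset.add_sum_erase (univ : Finset (Fin n)) (a i) (mem_univ i)]
  have hrow_sq : ∀ i, ∑ j, a i j ^ 2 = t i ^ 2 + q i := by
    intro i
    rw [ht, hq, Finset.add_sum_erase (univ : Finset (Fin n)) (fun j => a i j ^ 2) (mem_univ i)]
  -- normalization : ∑ i ∑ j a i j ^ 2 = 1
  have hWdiag : ∀ j, (W j j).re = (ρ j j).re := by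
    intro j
    have hinner : (inner ℂ (η j) (η j) : ℂ) = 1 := by
      rw [inner_self_eq_norm_sq_to_K, hη j]
      norm_num
    rw [hW j j, hinner, mul_one, Complex.ofReal_re, Real.sqrt_mul_self (hdiag_nonneg j)]
  have htr1 : ∑ j, (ρ j j).re = 1 := by
    have : (ρ.trace).re = 1 := by rw [hρtr]; rfl
    rw [Matrix.trace] at this
    simpa [Matrix.diag, Complex.re_sum] using this
  have hnorm : ∑ i, ∑ j, a i j ^ 2 = 1 := by
    have h1 : ∑ j, ∑ i, a i j ^ 2 = 1 := by
      have h2 : ∀ j, ∑ i, a i j ^ 2 = (W j j).re := by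
        intro j
        rw [← hB, aux_col_norm B j]
      rw [Finset.sum_congr rfl (fun j _ => h2 j)]
      rw [Finset.sum_congr rfl (fun j _ => hWdiag j)]
      exact htr1
    rw [Finset.sum_comm]
    exact h1
  have hPt : P = ∑ i, t i ^ 2 := hP
  have hQ : ∑ i, q i = 1 - P := by
    have : ∑ i, (t i ^ 2 + q i) = 1 := by
      rw [← Finset.sum_congr rfl (fun i _ => hrow_sq i)]
      exact hnorm
    rw [Finset.sum_add_distrib] at this
    rw [hPt]
    linarith
  have hP0 : 0 ≤ P := by
    rw [hPt]; exact Finset.sum_nonneg fun i _ => sq_nonneg _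
  have h1P : 0 ≤ 1 - P := by
    rw [← hQ]; exact Finset.sum_nonneg fun i _ => hq0 i
  -- Cauchy–Schwarz per row : s i ^ 2 ≤ (n-1) q i
  have hsq_bound : ∀ i, s i ^ 2 ≤ ((n:ℝ) - 1) * q i := by
    intro i
    have hc : ((univ : Finset (Fin n)).erase i).card = n - 1 := by
      rw [Finset.card_erase_of_mem (mem_univ i), Finset.card_univ, Fintype.card_fin]
    have h := sq_sum_le_card_mul_sum_sq (s := (univ : Finset (Fin n)).erase i)
      (f := fun j => a i j)
    rw [hc] at h
    have hcast : ((n - 1 : ℕ) : ℝ) = (n:ℝ) - 1 := by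
      have : 1 ≤ n := le_trans (by norm_num) hn
      push_cast [Nat.cast_sub this]
      ring
    calc s i ^ 2 ≤ ((n - 1 : ℕ) : ℝ) * ∑ j ∈ univ.erase i, a i j ^ 2 := h
      _ = ((n:ℝ) - 1) * q i := by rw [hcast]
  have hs_le : ∀ i, s i ≤ Real.sqrt (((n:ℝ) - 1) * q i) := by
    intro i
    rw [Real.le_sqrt (hs0 i) (mul_nonneg hn1 (hq0 i))]
    exact hsq_bound i
  -- the main sum bound
  have hmain : ∑ j, ∑ k ∈ univ.filter (fun k => k ≠ j),
      ‖ρ j k * (inner ℂ (η k) (η j) : ℂ)‖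
      ≤ ∑ i, (2 * t i * s i + (s i ^ 2 - q i)) := by
    have step1 : ∑ j, ∑ k ∈ univ.filter (fun k => k ≠ j),
        ‖ρ j k * (inner ℂ (η k) (η j) : ℂ)‖
        ≤ ∑ j, ∑ k ∈ univ.filter (fun k => k ≠ j), ∑ i, a i j * a i k := by
      refine Finset.sum_le_sum fun j _ => Finset.sum_le_sum fun k _ => hpoint j k
    have step2 : ∑ j, ∑ k ∈ univ.filter (fun k => k ≠ j), ∑ i, a i j * a i k
        = ∑ i, (2 * t i * s i + (s i ^ 2 - q i)) := by
      rw [show ∑ j, ∑ k ∈ univ.filter (fun k => k ≠ j), ∑ i, a i j * a i k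
          = ∑ i, ∑ j, ∑ k ∈ univ.filter (fun k => k ≠ j), a i j * a i k by
        rw [Finset.sum_congr rfl fun j _ => (Finset.sum_comm :
          ∑ k ∈ univ.filter (fun k => k ≠ j), ∑ i, a i j * a i k
            = ∑ i, ∑ k ∈ univ.filter (fun k => k ≠ j), a i j * a i k)]
        exact Finset.sum_comm]
      refine Finset.sum_congr rfl fun i _ => ?_
      rw [aux_offdiag_sum (fun j => a i j), hrow_sum i, hrow_sq i]
      ring
    exact step1.trans_eq step2
  -- bound the two pieces
  have hb1 : ∑ i, (s i ^ 2 - q i) ≤ ((n:ℝ) - 2) * (1 - P) := by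
    calc ∑ i, (s i ^ 2 - q i) ≤ ∑ i, ((n:ℝ) - 2) * q i := by
          refine Finset.sum_le_sum fun i _ => ?_
          have := hsq_bound i
          linarith
      _ = ((n:ℝ) - 2) * (1 - P) := by rw [← Finset.mul_sum, hQ]
  have hb2 : ∑ i, 2 * t i * s i ≤ 2 * Real.sqrt (((n:ℝ) - 1) * P * (1 - P)) := by
    have ht0 : ∀ i, 0 ≤ t i := fun i => ha0 i i
    have step1 : ∑ i, 2 * t i * s i
        ≤ ∑ i, 2 * Real.sqrt ((n:ℝ) - 1) * (t i * Real.sqrt (q i)) := by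
      refine Finset.sum_le_sum fun i _ => ?_
      have h := hs_le i
      rw [Real.sqrt_mul hn1] at h
      calc 2 * t i * s i ≤ 2 * t i * (Real.sqrt ((n:ℝ) - 1) * Real.sqrt (q i)) := by
            refine mul_le_mul_of_nonneg_left h (by positivity)
        _ = 2 * Real.sqrt ((n:ℝ) - 1) * (t i * Real.sqrt (q i)) := by ring
    have step2 : ∑ i, t i * Real.sqrt (q i) ≤ Real.sqrt P * Real.sqrt (1 - P) := by
      have h := Real.sum_mul_le_sqrt_mul_sqrt (univ : Finset (Fin n))
        (fun i => t i) (fun i => Real.sqrt (q i))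
      have hq_sq : ∑ i, Real.sqrt (q i) ^ 2 = 1 - P := by
        rw [← hQ]
        exact Finset.sum_congr rfl fun i _ => Real.sq_sqrt (hq0 i)
      rw [hq_sq, ← hPt] at h
      exact h
    calc ∑ i, 2 * t i * s i
        ≤ ∑ i, 2 * Real.sqrt ((n:ℝ) - 1) * (t i * Real.sqrt (q i)) := step1
      _ = 2 * Real.sqrt ((n:ℝ) - 1) * ∑ i, t i * Real.sqrt (q i) := by
          rw [Finset.mul_sum]
      _ ≤ 2 * Real.sqrt ((n:ℝ) - 1) * (Real.sqrt P * Real.sqrt (1 - P)) := by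
          refine mul_le_mul_of_nonneg_left step2 (by positivity)
      _ = 2 * Real.sqrt (((n:ℝ) - 1) * P * (1 - P)) := by
          rw [Real.sqrt_mul (by positivity : (0:ℝ) ≤ ((n:ℝ) - 1) * P),
            Real.sqrt_mul hn1]
          ring
  -- finish
  have htotal : ∑ j, ∑ k ∈ univ.filter (fun k => k ≠ j),
      ‖ρ j k * (inner ℂ (η k) (η j) : ℂ)‖
      ≤ ((n:ℝ) - 2) * (1 - P) + 2 * Real.sqrt (((n:ℝ) - 1) * P * (1 - P)) := by
    calc _ ≤ ∑ i, (2 * t i * s i + (s i ^ 2 - q i)) := hmain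
      _ = (∑ i, 2 * t i * s i) + ∑ i, (s i ^ 2 - q i) := Finset.sum_add_distrib
      _ ≤ _ := by linarith [hb1, hb2]
  rw [hX]
  have hfinal : (1 / (n:ℝ)) * (((n:ℝ) - 2) * (1 - P)
      + 2 * Real.sqrt (((n:ℝ) - 1) * P * (1 - P)))
      = (((n : ℝ) - 2) / n) * (1 - P) +
        (2 / n) * Real.sqrt (((n : ℝ) - 1) * P * (1 - P)) := by
    field_simp
  rw [← hfinal]
  exact mul_le_mul_of_nonneg_left htotal (by positivity)
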